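/- Let a ∈ M_α∖{1_α} and b ∈ M_β∖{1_β} be letters such that b is not left invertible in M_β. Then GP[a] ⊆ GP[b] if and only if α = β and M_α a ⊆ M_α b. Consequently, if in addition a is not left invertible, then GP[a] = GP[b] if and only if α = β and M_α a = M_α b. -/

import Mathlib

/-! Common definitions for graph products of monoids. -/

variable {V : Type*}

/-- A letter of the graph product alphabet: an element of one of the vertex monoids,
tagged by its vertex (its *support*). -/
abbrev GPLetter (M : V → Type*) : Type _ := (α : V) × M α

/-- The defining relations of the graph product: identity letters are trivial,
letters from the same vertex monoid multiply, and letters at adjacent vertices commute. -/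
def gpRel (G : SimpleGraph V) (M : V → Type*) [∀ α, Monoid (M α)] :
    FreeMonoid (GPLetter M) → FreeMonoid (GPLetter M) → Prop := fun w₁ w₂ =>
  (∃ α : V, w₁ = FreeMonoid.of (⟨α, (1 : M α)⟩ : GPLetter M) ∧ w₂ = 1) ∨
  (∃ (α : V) (x y : M α),
      w₁ = FreeMonoid.of (⟨α, x⟩ : GPLetter M) * FreeMonoid.of (⟨α, y⟩ : GPLetter M) ∧
      w₂ = FreeMonoid.of (⟨α, x * y⟩ : GPLetter M)) ∨
  (∃ (α β : V) (x : M α) (y : M β), G.Adj α β ∧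
      w₁ = FreeMonoid.of (⟨α, x⟩ : GPLetter M) * FreeMonoid.of (⟨β, y⟩ : GPLetter M) ∧
      w₂ = FreeMonoid.of (⟨β, y⟩ : GPLetter M) * FreeMonoid.of (⟨α, x⟩ : GPLetter M))

/-- The congruence on the free monoid generated by the graph product relations. -/
def gpCon (G : SimpleGraph V) (M : V → Type*) [∀ α, Monoid (M α)] :
    Con (FreeMonoid (GPLetter M)) := conGen (gpRel G M)

/-- The graph product of the monoids `M α` with respect to the graph `G`. -/
abbrev GraphProduct (G : SimpleGraph V) (M : V → Type*) [∀ α, Monoid (M α)] :=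
  (gpCon G M).Quotient

/-- The class `[w]` in the graph product of a word `w` (given as a list of letters). -/
def gpMk (G : SimpleGraph V) (M : V → Type*) [∀ α, Monoid (M α)]
    (l : List (GPLetter M)) : GraphProduct G M :=
  (gpCon G M).mk' (FreeMonoid.ofList l)

/-- A word is reduced: no letter is an identity, and between any two letters with the
same support there is a letter whose support is not adjacent to it. -/
def GPReduced (G : SimpleGraph V) (M : V → Type*) [∀ α, Monoid (M α)]
    (l : List (GPLetter M)) : Prop :=
  (∀ x ∈ l, x.2 ≠ 1) ∧
    ∀ i j : Fin l.length, i < j → (l.get i).1 = (l.get j).1 →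
      ∃ k : Fin l.length, i < k ∧ k < j ∧ ¬ G.Adj (l.get i).1 (l.get k).1

/-- One shuffle: transpose an adjacent pair of letters whose supports are adjacent in `G`. -/
def ShuffleStep (G : SimpleGraph V) (M : V → Type*)
    (l₁ l₂ : List (GPLetter M)) : Prop :=
  ∃ (u v : List (GPLetter M)) (x y : GPLetter M),
    G.Adj x.1 y.1 ∧ l₁ = u ++ x :: y :: v ∧ l₂ = u ++ y :: x :: v

/-- Two words are shuffle equivalent if one is obtained from the other by a finite
sequence of shuffles. -/
def ShuffleEquiv (G : SimpleGraph V) (M : V → Type*) :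
    List (GPLetter M) → List (GPLetter M) → Prop :=
  Relation.ReflTransGen (ShuffleStep G M)

/-- A letter is left invertible if it is left invertible in its vertex monoid. -/
def LeftInvertibleLetter (M : V → Type*) [∀ α, Monoid (M α)] (x : GPLetter M) : Prop :=
  ∃ y : M x.1, y * x.2 = 1

/-- The set of supports of the letters of a word. -/
def suppSet (M : V → Type*) (l : List (GPLetter M)) : Set V := {α | ∃ x ∈ l, x.1 = α}

/-- A complete block: a reduced word whose support induces a complete subgraph of `G`. -/
def CompleteBlock (G : SimpleGraph V) (M : V → Type*) [∀ α, Monoid (M α)]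
    (l : List (GPLetter M)) : Prop :=
  GPReduced G M l ∧ ∀ x ∈ l, ∀ y ∈ l, x.1 ≠ y.1 → G.Adj x.1 y.1

/-- A list of blocks is a left Foata normal form: the concatenation is reduced, each
block is nonempty with complete support, and each letter of a block fails to be
adjacent to some letter of the preceding block. -/
def LeftFoataForm (G : SimpleGraph V) (M : V → Type*) [∀ α, Monoid (M α)]
    (blocks : List (List (GPLetter M))) : Prop :=
  GPReduced G M blocks.flatten ∧
  (∀ b ∈ blocks, b ≠ [] ∧ ∀ x ∈ b, ∀ y ∈ b, x.1 ≠ y.1 → G.Adj x.1 y.1) ∧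
  List.Chain' (fun b₁ b₂ => ∀ y ∈ b₂, ∃ x ∈ b₁, ¬ G.Adj x.1 y.1) blocks

/-- The principal left ideal `S a = {s * a : s ∈ S}` of a monoid. -/
def plIdeal {S : Type*} [Monoid S] (a : S) : Set S := Set.range (· * a)

/-- The ascending chain condition on principal left ideals. -/
def ACCPL (S : Type*) [Monoid S] : Prop :=
  ∀ a : ℕ → S, (∀ n, plIdeal (a n) ⊆ plIdeal (a (n + 1))) →
    ∃ n, ∀ k, plIdeal (a (n + k)) = plIdeal (a n)

/-- `A` is a left ideal of the monoid `S`. -/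
def IsLeftIdeal {S : Type*} [Monoid S] (A : Set S) : Prop :=
  A.Nonempty ∧ ∀ s : S, ∀ a ∈ A, s * a ∈ A

/-- `A` is generated, as a left ideal, by a finite subset of itself. -/
def IsFGLeftIdeal {S : Type*} [Monoid S] (A : Set S) : Prop :=
  ∃ F : Finset S, ↑F ⊆ A ∧ A = {x | ∃ s : S, ∃ a ∈ F, x = s * a}

/-- A monoid is weakly left noetherian if every left ideal is finitely generated. -/
def WeaklyLeftNoetherian (S : Type*) [Monoid S] : Prop :=
  ∀ A : Set S, IsLeftIdeal A → IsFGLeftIdeal A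

/-- A monoid is left ideal Howson if the intersection of any two principal left ideals
is empty or finitely generated. -/
def LeftIdealHowson (S : Type*) [Monoid S] : Prop :=
  ∀ a b : S, plIdeal a ∩ plIdeal b = ∅ ∨ IsFGLeftIdeal (plIdeal a ∩ plIdeal b)

/-- An LCM monoid: intersections of principal left ideals are empty or principal. -/
def LCMMonoid (S : Type*) [Monoid S] : Prop :=
  ∀ a b : S, plIdeal a ∩ plIdeal b = ∅ ∨ ∃ c : S, plIdeal a ∩ plIdeal b = plIdeal c

/-- A left congruence on a monoid. -/
def IsLeftCongruence {S : Type*} [Monoid S] (ρ : S → S → Prop) : Prop :=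
  Equivalence ρ ∧ ∀ u s t : S, ρ s t → ρ (u * s) (u * t)

/-- The least left congruence containing a set of pairs. -/
def leftConGen {S : Type*} [Monoid S] (R : Set (S × S)) : S → S → Prop := fun s t =>
  ∀ ρ : S → S → Prop, IsLeftCongruence ρ → (∀ p ∈ R, ρ p.1 p.2) → ρ s t

/-- A monoid is finitely left equated if every left annihilator `l(a)` is the left
congruence generated by a finite set. -/
def FinitelyLeftEquated (S : Type*) [Monoid S] : Prop :=
  ∀ a : S, ∃ R : Set (S × S), R.Finite ∧ ∀ s t : S, s * a = t * a ↔ leftConGen R s t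

/-- A monoid is a group: every element has a two-sided inverse. -/
def IsGroupMonoid (S : Type*) [Monoid S] : Prop :=
  ∀ a : S, ∃ b : S, a * b = 1 ∧ b * a = 1

/-- Weakly left coherent: left ideal Howson and finitely left equated. -/
def WeaklyLeftCoherent (S : Type*) [Monoid S] : Prop :=
  LeftIdealHowson S ∧ FinitelyLeftEquated S

/-- The restricted direct product of a family of monoids: elements of the direct
product with only finitely many non-identity coordinates. -/
def restrictedDirectProduct {ι : Type*} (M : ι → Type*) [∀ i, Monoid (M i)] :
    Submonoid (∀ i, M i) where
  carrier := {f | {i | f i ≠ 1}.Finite}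
  one_mem' := by simp
  mul_mem' := by
    intro f g hf hg
    refine Set.Finite.subset (hf.union hg) ?_
    intro i hi
    rw [Set.mem_union]
    by_contra h
    push_neg at h
    obtain ⟨h1, h2⟩ := h
    simp only [Set.mem_setOf_eq, not_not] at h1 h2
    apply hi
    show f i * g i = 1
    rw [h1, h2, one_mul]

/-- Condition (i) for relative completeness: both monoids have two elements, at least
one is not a group, and both vertices are adjacent to every other vertex. -/
def RCcondI (G : SimpleGraph V) (M : V → Type*) [∀ α, Monoid (M α)]
    (α β : V) : Prop :=
  Nat.card (M α) = 2 ∧ Nat.card (M β) = 2 ∧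
  (¬ IsGroupMonoid (M α) ∨ ¬ IsGroupMonoid (M β)) ∧
  ∀ γ : V, γ ≠ α → γ ≠ β → G.Adj α γ ∧ G.Adj β γ

/-- `G` is relatively complete with respect to the family `M` of vertex monoids. -/
def RelativelyComplete (G : SimpleGraph V) (M : V → Type*)
    [∀ α, Monoid (M α)] : Prop :=
  (∀ α β : V, α ≠ β → ¬ G.Adj α β →
      RCcondI G M α β ∨ (IsGroupMonoid (M α) ∧ IsGroupMonoid (M β))) ∧
  ∀ α β α' β' : V, α ≠ β → ¬ G.Adj α β → RCcondI G M α β →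
    α' ≠ β' → ¬ G.Adj α' β' → RCcondI G M α' β' →
    (α = α' ∧ β = β') ∨ (α = β' ∧ β = α')

open scoped Classical in
private lemma range_mul_subset_iff {S : Type*} [Monoid S] (a b : S) :
    Set.range (· * a) ⊆ Set.range (· * b) ↔ ∃ s, s * b = a := by
  constructor
  · intro h
    exact h ⟨1, one_mul a⟩
  · rintro ⟨s, rfl⟩ x ⟨t, rfl⟩
    exact ⟨t * s, mul_assoc t s b⟩

open scoped Classical in
/-- The projection of the graph product onto the vertex monoid at `γ`. -/
noncomputable def gpProj (G : SimpleGraph V) (M : V → Type*) [∀ α, Monoid (M α)] (γ : V) :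
    GraphProduct G M →* M γ :=
  Con.lift _ (FreeMonoid.lift fun x : GPLetter M => if h : x.1 = γ then h ▸ x.2 else 1) (by
    refine Con.conGen_le.mpr ?_
    rintro w₁ w₂ (⟨α, rfl, rfl⟩ | ⟨α, x, y, rfl, rfl⟩ | ⟨α, β, x, y, hadj, rfl, rfl⟩) <;>
      simp only [Con.ker_rel, map_mul, map_one, FreeMonoid.lift_eval_of]
    · by_cases h : α = γ
      · subst h; simp
      · simp [h]
    · by_cases h : α = γ
      · subst h; simp
      · simp [h]
    · have hne : α ≠ β := hadj.ne
      by_cases h1 : α = γ <;> by_cases h2 : β = γ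
      · exact absurd (h1.trans h2.symm) hne
      · simp [h1, h2]
      · simp [h1, h2]
      · simp [h1, h2])

open scoped Classical in
lemma gpProj_letter (G : SimpleGraph V) (M : V → Type*) [∀ α, Monoid (M α)]
    (γ δ : V) (c : M δ) :
    gpProj G M γ (gpMk G M [⟨δ, c⟩]) = if h : δ = γ then h ▸ c else 1 := by
  have h1 : gpMk G M [⟨δ, c⟩] = (gpCon G M).mk' (FreeMonoid.of (⟨δ, c⟩ : GPLetter M)) := rfl
  rw [h1, gpProj]
  exact (Con.lift_mk' ..).trans (FreeMonoid.lift_eval_of ..)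

lemma gpMk_mul_letter (G : SimpleGraph V) (M : V → Type*) [∀ α, Monoid (M α)]
    (α : V) (x y : M α) :
    gpMk G M [⟨α, x⟩] * gpMk G M [⟨α, y⟩] = gpMk G M [⟨α, x * y⟩] := by
  show (gpCon G M).mk' _ * (gpCon G M).mk' _ = (gpCon G M).mk' _
  rw [← map_mul]
  refine (Con.eq _).mpr ?_
  exact ConGen.Rel.of _ _ (Or.inr (Or.inl ⟨α, x, y, rfl, rfl⟩))

private lemma stmt4_key {V : Type*} (G : SimpleGraph V) (M : V → Type*)
    [∀ α, Monoid (M α)] {α β : V} (a : M α) (b : M β)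
    (hb : ¬ ∃ b' : M β, b' * b = 1) :
    plIdeal (gpMk G M [⟨α, a⟩]) ⊆ plIdeal (gpMk G M [⟨β, b⟩]) ↔
      ∃ h : α = β, Set.range (fun m : M α => m * a) ⊆
        Set.range (fun m : M α => m * (cast (congrArg M h).symm b)) := by
  rw [show plIdeal (gpMk G M [⟨α, a⟩]) = Set.range (· * gpMk G M [⟨α, a⟩]) from rfl,
    show plIdeal (gpMk G M [⟨β, b⟩]) = Set.range (· * gpMk G M [⟨β, b⟩]) from rfl,
    range_mul_subset_iff]
  constructor
  · rintro ⟨g, hg⟩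
    obtain ⟨w, rfl⟩ := Con.mk'_surjective g
    have hβ := congrArg (gpProj G M β) hg
    rw [map_mul, gpProj_letter, gpProj_letter] at hβ
    rw [dif_pos rfl] at hβ
    have hαβ : α = β := by
      by_contra hne
      rw [dif_neg hne] at hβ
      exact hb ⟨_, hβ⟩
    subst hαβ
    rw [dif_pos rfl] at hβ
    refine ⟨rfl, ?_⟩
    have : (∃ s, s * b = a) := ⟨_, hβ⟩
    rw [show (fun m : M α => m * (cast (congrArg M (rfl : α = α)).symm b)) = (· * b) from rfl]
    exact (range_mul_subset_iff a b).mpr this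
  · rintro ⟨h, hsub⟩
    subst h
    obtain ⟨m, hm⟩ := (range_mul_subset_iff a b).mp hsub
    exact ⟨gpMk G M [⟨α, m⟩], by rw [gpMk_mul_letter, hm]⟩

/-- comparison of principal left ideals generated by single letters. -/
theorem stmt4 {V : Type*} (G : SimpleGraph V) (M : V → Type*) [∀ α, Monoid (M α)]
    {α β : V} (a : M α) (b : M β)
    (ha1 : a ≠ 1) (hb1 : b ≠ 1) (hb : ¬ ∃ b' : M β, b' * b = 1) :
    (plIdeal (gpMk G M [⟨α, a⟩]) ⊆ plIdeal (gpMk G M [⟨β, b⟩]) ↔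
      ∃ h : α = β, Set.range (fun m : M α => m * a) ⊆
        Set.range (fun m : M α => m * (cast (congrArg M h).symm b))) ∧
    ((¬ ∃ a' : M α, a' * a = 1) →
      (plIdeal (gpMk G M [⟨α, a⟩]) = plIdeal (gpMk G M [⟨β, b⟩]) ↔
        ∃ h : α = β, Set.range (fun m : M α => m * a) =
          Set.range (fun m : M α => m * (cast (congrArg M h).symm b)))) := by
  refine ⟨stmt4_key G M a b hb, ?_⟩
  intro ha
  constructor
  · intro heq
    obtain ⟨h, h1⟩ := (stmt4_key G M a b hb).mp heq.le
    subst h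
    obtain ⟨h', h2⟩ := (stmt4_key G M b a ha).mp heq.ge
    refine ⟨rfl, subset_antisymm h1 ?_⟩
    exact h2
  · rintro ⟨h, heq⟩
    subst h
    exact subset_antisymm
      ((stmt4_key G M a b hb).mpr ⟨rfl, heq.le⟩)
      ((stmt4_key G M b a ha).mpr ⟨rfl, heq.ge⟩)
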